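/- Optimizing the RDP-to-DP conversion over λ for the composed Gaussian mechanism: if a mechanism satisfies (λ, λρ)-RDP for all λ > 1 (with ρ > 0), then for any 0 < δ < 1 it satisfies (ε, δ)-DP with ε = ρ + 2√(ρ log(1/δ)), obtained by choosing λ = 1 + √(log(1/δ)/ρ). -/

import Mathlib

open scoped ENNReal

/-- Rényi divergence of order `l` between two discrete distributions. -/
noncomputable def renyiDiv {Ω : Type*} (l : ℝ) (P Q : PMF Ω) : EReal :=
  ((l - 1)⁻¹ : ℝ) * ENNReal.log (∑' x, P x ^ l * Q x ^ (1 - l))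

open MeasureTheory in
/-- Hölder's inequality for `tsum` in `ℝ≥0∞`. -/
lemma tsum_mul_le_holder {Ω : Type*} {p q : ℝ} (hpq : Real.HolderConjugate p q)
    (f g : Ω → ℝ≥0∞) :
    ∑' x, f x * g x ≤ (∑' x, f x ^ p) ^ (1 / p) * (∑' x, g x ^ q) ^ (1 / q) := by
  letI : MeasurableSpace Ω := ⊤
  haveI : MeasurableSingletonClass Ω := ⟨fun _ => trivial⟩
  have h := ENNReal.lintegral_mul_le_Lp_mul_Lq (Measure.count : Measure Ω) hpq
    (measurable_from_top.aemeasurable (f := f)) (measurable_from_top.aemeasurable (f := g))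
  simpa [lintegral_count] using h

/-- The elementary real inequality behind the RDP-to-DP conversion. -/
lemma key_real {ρ δ t l : ℝ} (hρ : 0 < ρ) (hδ0 : 0 < δ) (ht : 0 ≤ t) (hl : 1 < l) :
    Real.exp ((l - 1) * ρ) * t ^ ((l - 1) / l) ≤
      Real.exp (l * ρ + Real.log (1 / δ) / (l - 1)) * t + δ := by
  have hl0 : (0 : ℝ) < l := by linarith
  have hm : (0 : ℝ) < l - 1 := by linarith
  rcases eq_or_lt_of_le ht with h0 | h0
  · rw [← h0, Real.zero_rpow (by positivity : (l - 1) / l ≠ 0)]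
    simp only [mul_zero]
    linarith
  · by_cases hc : Real.exp ((l - 1) * ρ) * t ^ ((l - 1) / l) ≤ δ
    · have hpos : 0 ≤ Real.exp (l * ρ + Real.log (1 / δ) / (l - 1)) * t := by positivity
      linarith
    · push_neg at hc
      set u := Real.log t with hu
      have htu : t = Real.exp u := (Real.exp_log h0).symm
      have hrw : t ^ ((l - 1) / l) = Real.exp (u * ((l - 1) / l)) := by
        rw [Real.rpow_def_of_pos h0]
      rw [hrw, ← Real.exp_add] at hc ⊢
      have hlog : Real.log δ < (l - 1) * ρ + u * ((l - 1) / l) := by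
        have := Real.log_lt_log hδ0 hc
        rwa [Real.log_exp] at this
      have hLδ : Real.log (1 / δ) = -Real.log δ := by rw [one_div, Real.log_inv]
      have hexp : (l - 1) * ρ + u * ((l - 1) / l) ≤
          l * ρ + Real.log (1 / δ) / (l - 1) + u := by
        rw [← sub_nonneg]
        have heq : l * ρ + Real.log (1 / δ) / (l - 1) + u -
            ((l - 1) * ρ + u * ((l - 1) / l)) =
            (ρ * l * (l - 1) + u * (l - 1) - Real.log δ * l) / (l * (l - 1)) := by
          rw [hLδ]
          field_simp
          ring
        rw [heq]
        apply div_nonneg _ (by positivity)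
        have h2 : Real.log δ * l < ((l - 1) * ρ + u * ((l - 1) / l)) * l :=
          mul_lt_mul_of_pos_right hlog hl0
        have h3 : ((l - 1) * ρ + u * ((l - 1) / l)) * l =
            (l - 1) * ρ * l + u * (l - 1) := by field_simp
        nlinarith
      have := Real.exp_le_exp.mpr hexp
      rw [htu, ← Real.exp_add]
      linarith

/-- The algebraic identity: at the optimal `l`, the converted privacy parameter
equals `ρ + 2√(ρ log(1/δ))`. -/
lemma eps_eq {ρ δ : ℝ} (hρ : 0 < ρ) (hδ0 : 0 < δ) (hδ1 : δ < 1) :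
    (1 + Real.sqrt (Real.log (1 / δ) / ρ)) * ρ +
        Real.log (1 / δ) / ((1 + Real.sqrt (Real.log (1 / δ) / ρ)) - 1) =
      ρ + 2 * Real.sqrt (ρ * Real.log (1 / δ)) := by
  set L := Real.log (1 / δ) with hLdef
  have hL : 0 < L := Real.log_pos ((one_lt_div hδ0).mpr hδ1)
  set s := Real.sqrt (L / ρ) with hsdef
  have hs : 0 < s := Real.sqrt_pos.mpr (by positivity)
  have hs2 : s ^ 2 = L / ρ := Real.sq_sqrt (by positivity)
  have hLeq : L = s ^ 2 * ρ := by rw [hs2]; field_simp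
  have h1 : ρ * L = (s * ρ) ^ 2 := by rw [hLeq]; ring
  have h2 : Real.sqrt (ρ * L) = s * ρ := by rw [h1, Real.sqrt_sq (by positivity)]
  have h3 : (1 + s) - 1 = s := by ring
  rw [h2, h3, hLeq]
  field_simp
  ring

theorem rdp_to_dp_optimized {X Ω : Type*} (Neighbor : X → X → Prop)
    (A : X → PMF Ω) (ρ δ : ℝ) (hρ : 0 < ρ) (hδ0 : 0 < δ) (hδ1 : δ < 1)
    (hRDP : ∀ l : ℝ, 1 < l → ∀ D D', Neighbor D D' →
      renyiDiv l (A D) (A D') ≤ ((l * ρ : ℝ) : EReal)) :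
    (∀ D D', Neighbor D D' → ∀ S : Set Ω,
        (A D).toOuterMeasure S ≤
          ENNReal.ofReal (Real.exp (ρ + 2 * Real.sqrt (ρ * Real.log (1 / δ)))) *
            (A D').toOuterMeasure S + ENNReal.ofReal δ) ∧
      (1 + Real.sqrt (Real.log (1 / δ) / ρ)) * ρ +
          Real.log (1 / δ) / ((1 + Real.sqrt (Real.log (1 / δ) / ρ)) - 1) =
        ρ + 2 * Real.sqrt (ρ * Real.log (1 / δ)) := by
  refine ⟨?_, eps_eq hρ hδ0 hδ1⟩
  intro D D' hN S
  set L := Real.log (1 / δ) with hLdef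
  have hL : 0 < L := Real.log_pos ((one_lt_div hδ0).mpr hδ1)
  set l := 1 + Real.sqrt (L / ρ) with hldef
  have hs : 0 < Real.sqrt (L / ρ) := Real.sqrt_pos.mpr (by positivity)
  have hl : 1 < l := by rw [hldef]; linarith
  have hl0 : (0 : ℝ) < l := by linarith
  have hm : (0 : ℝ) < l - 1 := by linarith
  set P : PMF Ω := A D with hP
  set Q : PMF Ω := A D' with hQ
  set M := ∑' x, P x ^ l * Q x ^ (1 - l) with hMdef
  -- Step 1: bound on M from the RDP hypothesis
  have hRDP' : ((l - 1)⁻¹ : ℝ) * ENNReal.log M ≤ ((l * ρ : ℝ) : EReal) := hRDP l hl D D' hN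
  have hlogM : ENNReal.log M ≤ (((l - 1) * (l * ρ) : ℝ) : EReal) := by
    have hdiv : ENNReal.log M / ((l - 1 : ℝ) : EReal) ≤ ((l * ρ : ℝ) : EReal) := by
      rw [div_eq_mul_inv, ← EReal.coe_inv, mul_comm]
      exact hRDP'
    have := (EReal.div_le_iff_le_mul (b := ((l - 1 : ℝ) : EReal))
      (by exact_mod_cast hm) (EReal.coe_ne_top _)).mp hdiv
    rwa [← EReal.coe_mul] at this
  have hM_le : M ≤ ENNReal.ofReal (Real.exp ((l - 1) * (l * ρ))) := by
    calc M = EReal.exp (ENNReal.log M) := (ENNReal.exp_log M).symm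
      _ ≤ EReal.exp (((l - 1) * (l * ρ) : ℝ)) := EReal.exp_monotone hlogM
      _ = ENNReal.ofReal (Real.exp ((l - 1) * (l * ρ))) := EReal.exp_coe _
  have hM_ne_top : M ≠ ⊤ := ne_top_of_le_ne_top ENNReal.ofReal_ne_top hM_le
  -- Step 2: absolute continuity
  have habs : ∀ x, Q x = 0 → P x = 0 := by
    intro x hQx
    by_contra hPx
    have hterm : P x ^ l * Q x ^ (1 - l) = ⊤ := by
      rw [hQx, ENNReal.zero_rpow_of_neg (by linarith),
        ENNReal.mul_top (ENNReal.rpow_pos (pos_iff_ne_zero.mpr hPx)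
          (PMF.apply_ne_top P x)).ne']
    have h2 := ENNReal.le_tsum (f := fun x => P x ^ l * Q x ^ (1 - l)) x
    rw [hterm, top_le_iff] at h2
    exact hM_ne_top h2
  -- Step 3: Hölder setup
  set f : Ω → ℝ≥0∞ := S.indicator (fun x => (P x ^ l * Q x ^ (1 - l)) ^ l⁻¹) with hfdef
  set g : Ω → ℝ≥0∞ := S.indicator (fun x => Q x ^ (1 - l⁻¹)) with hgdef
  have hpoint : ∀ x, S.indicator (⇑P) x ≤ f x * g x := by
    intro x
    by_cases hx : x ∈ S
    · rw [hfdef, hgdef, Set.indicator_of_mem hx, Set.indicator_of_mem hx,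
        Set.indicator_of_mem hx]
      by_cases hQx : Q x = 0
      · rw [habs x hQx]; exact zero_le
      · have hQtop : Q x ≠ ⊤ := PMF.apply_ne_top Q x
        have hPtop : P x ≠ ⊤ := PMF.apply_ne_top P x
        have hQ1top : Q x ^ (1 - l) ≠ ⊤ := by
          rw [show (1 : ℝ) - l = -(l - 1) by ring, ENNReal.rpow_neg]
          exact ENNReal.inv_ne_top.mpr
            (ENNReal.rpow_pos (pos_iff_ne_zero.mpr hQx) hQtop).ne'
        have e : (P x ^ l * Q x ^ (1 - l)) ^ l⁻¹ * Q x ^ (1 - l⁻¹) = P x := by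
          rw [ENNReal.mul_rpow_of_ne_top (ENNReal.rpow_ne_top_of_nonneg (by positivity) hPtop)
              hQ1top, ← ENNReal.rpow_mul, ← ENNReal.rpow_mul, mul_inv_cancel₀ hl0.ne',
            ENNReal.rpow_one, mul_assoc, ← ENNReal.rpow_add _ _ hQx hQtop,
            show (1 - l) * l⁻¹ + (1 - l⁻¹) = 0 by field_simp; ring, ENNReal.rpow_zero, mul_one]
        rw [e]
    · rw [hfdef, hgdef, Set.indicator_of_notMem hx, Set.indicator_of_notMem hx,
        Set.indicator_of_notMem hx, zero_mul]
  have hpq : Real.HolderConjugate l (l / (l - 1)) := Real.HolderConjugate.conjExponent hl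
  have hHolder := tsum_mul_le_holder hpq f g
  -- simplify the factors
  have hfl : ∀ x, f x ^ l ≤ P x ^ l * Q x ^ (1 - l) := by
    intro x
    by_cases hx : x ∈ S
    · rw [hfdef, Set.indicator_of_mem hx, ← ENNReal.rpow_mul, inv_mul_cancel₀ hl0.ne',
        ENNReal.rpow_one]
    · rw [hfdef, Set.indicator_of_notMem hx, ENNReal.zero_rpow_of_pos hl0]
      exact zero_le
  have hgq : ∀ x, g x ^ (l / (l - 1)) = S.indicator (⇑Q) x := by
    intro x
    by_cases hx : x ∈ S
    · rw [hgdef, Set.indicator_of_mem hx, Set.indicator_of_mem hx, ← ENNReal.rpow_mul,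
        show (1 - l⁻¹) * (l / (l - 1)) = 1 by field_simp, ENNReal.rpow_one]
    · rw [hgdef, Set.indicator_of_notMem hx, Set.indicator_of_notMem hx,
        ENNReal.zero_rpow_of_pos (by positivity)]
  set b := ∑' x, S.indicator (⇑Q) x with hbdef
  have hb_le_one : b ≤ 1 := by
    rw [hbdef]
    calc ∑' x, S.indicator (⇑Q) x ≤ ∑' x, Q x :=
          ENNReal.tsum_le_tsum fun x => Set.indicator_le_self S (⇑Q) x
      _ = 1 := Q.tsum_coe
  have hb_ne_top : b ≠ ⊤ := ne_top_of_le_ne_top ENNReal.one_ne_top hb_le_one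
  set t := b.toReal with htdef
  have ht0 : 0 ≤ t := ENNReal.toReal_nonneg
  have hbt : b = ENNReal.ofReal t := (ENNReal.ofReal_toReal hb_ne_top).symm
  have hgsum : (∑' x, g x ^ (l / (l - 1))) = b := by
    rw [hbdef]; exact tsum_congr hgq
  have hq1 : 1 / (l / (l - 1)) = (l - 1) / l := by field_simp
  -- chain of inequalities
  have hchain : P.toOuterMeasure S ≤
      ENNReal.ofReal (Real.exp ((l - 1) * ρ) * t ^ ((l - 1) / l)) := by
    calc P.toOuterMeasure S = ∑' x, S.indicator (⇑P) x := P.toOuterMeasure_apply S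
      _ ≤ ∑' x, f x * g x := ENNReal.tsum_le_tsum hpoint
      _ ≤ (∑' x, f x ^ l) ^ (1 / l) * (∑' x, g x ^ (l / (l - 1))) ^ (1 / (l / (l - 1))) :=
          hHolder
      _ ≤ M ^ (1 / l) * b ^ ((l - 1) / l) := by
          rw [hgsum, hq1]
          exact mul_le_mul_left (ENNReal.rpow_le_rpow (ENNReal.tsum_le_tsum hfl)
            (by positivity)) _
      _ ≤ (ENNReal.ofReal (Real.exp ((l - 1) * (l * ρ)))) ^ (1 / l) * b ^ ((l - 1) / l) :=
          mul_le_mul_left (ENNReal.rpow_le_rpow hM_le (by positivity)) _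
      _ = ENNReal.ofReal (Real.exp ((l - 1) * ρ)) * ENNReal.ofReal (t ^ ((l - 1) / l)) := by
          rw [ENNReal.ofReal_rpow_of_pos (Real.exp_pos _), ← Real.exp_mul,
            show (l - 1) * (l * ρ) * (1 / l) = (l - 1) * ρ by field_simp,
            hbt, ENNReal.ofReal_rpow_of_nonneg ht0 (by positivity)]
      _ = ENNReal.ofReal (Real.exp ((l - 1) * ρ) * t ^ ((l - 1) / l)) := by
          rw [← ENNReal.ofReal_mul (Real.exp_pos _).le]
  -- apply the real inequality
  have hkey := key_real (t := t) (l := l) hρ hδ0 ht0 hl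
  calc P.toOuterMeasure S ≤ ENNReal.ofReal (Real.exp ((l - 1) * ρ) * t ^ ((l - 1) / l)) :=
        hchain
    _ ≤ ENNReal.ofReal (Real.exp (l * ρ + L / (l - 1)) * t + δ) := ENNReal.ofReal_le_ofReal hkey
    _ = ENNReal.ofReal (Real.exp (l * ρ + L / (l - 1))) * ENNReal.ofReal t +
        ENNReal.ofReal δ := by
        rw [ENNReal.ofReal_add (by positivity) hδ0.le,
          ENNReal.ofReal_mul (Real.exp_pos _).le]
    _ = ENNReal.ofReal (Real.exp (ρ + 2 * Real.sqrt (ρ * L))) * Q.toOuterMeasure S +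
        ENNReal.ofReal δ := by
        rw [show l * ρ + L / (l - 1) = ρ + 2 * Real.sqrt (ρ * L) by
            have := eps_eq hρ hδ0 hδ1
            rw [← hLdef] at this
            rw [hldef]
            linarith [this],
          ← hbt, hbdef, ← Q.toOuterMeasure_apply S]
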